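/- arXiv:2111.12272 — 2 statements merged into one kernel-verified Lean document; each statement's English description precedes it below -/
import Mathlib

section
/- Let n ≥ 1 and N ≥ 1, let Y ∈ ℝⁿ, let X be a real n × N matrix, let α ∈ ℝᴺ, and let ρ ≥ 0. Then the worst-case residual norm over all bounded perturbations of the data, sup { ‖(Y + ΔY) − (X + ΔX)α‖₂ : ΔY ∈ ℝⁿ with ‖ΔY‖₂ ≤ ρ, ΔX a real n × N matrix with ‖ΔX‖ ≤ ρ }, is equal to ‖Y − Xα‖₂ + ρ‖α‖₂ + ρ. -/
open RealInnerProductSpace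

noncomputable def matOpNorm {n N : ℕ} (M : Matrix (Fin n) (Fin N) ℝ) : ℝ :=
  ‖LinearMap.toContinuousLinearMap (Matrix.toEuclideanLin M)‖

lemma entrywise_apply {n N : ℕ} (M : Matrix (Fin n) (Fin N) ℝ)
    (x : EuclideanSpace ℝ (Fin N)) (i : Fin n) :
    Matrix.toEuclideanLin M x i = ∑ j, M i j * x j := by
  rw [Matrix.toEuclideanLin_apply]
  change (M.mulVec x) i = _
  simp [Matrix.mulVec, dotProduct]

/-- The worst-case residual norm over all bounded perturbations of the data equals
`‖Y − Xα‖₂ + ρ‖α‖₂ + ρ`. -/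
theorem robust_residual_sup {n N : ℕ} (hn : 1 ≤ n) (hN : 1 ≤ N)
    (Y : EuclideanSpace ℝ (Fin n)) (X : Matrix (Fin n) (Fin N) ℝ)
    (α : EuclideanSpace ℝ (Fin N)) (ρ : ℝ) (hρ : 0 ≤ ρ) :
    sSup { r : ℝ | ∃ (ΔY : EuclideanSpace ℝ (Fin n)) (ΔX : Matrix (Fin n) (Fin N) ℝ),
        ‖ΔY‖ ≤ ρ ∧ matOpNorm ΔX ≤ ρ ∧
        r = ‖(Y + ΔY) - Matrix.toEuclideanLin (X + ΔX) α‖ }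
      = ‖Y - Matrix.toEuclideanLin X α‖ + ρ * ‖α‖ + ρ := by
  set res := Y - Matrix.toEuclideanLin X α with hres
  -- a unit vector u with res = ‖res‖ • u
  obtain ⟨u, hu1, hu2⟩ : ∃ u : EuclideanSpace ℝ (Fin n), ‖u‖ = 1 ∧ res = ‖res‖ • u := by
    by_cases h : res = 0
    · refine ⟨EuclideanSpace.single ⟨0, hn⟩ (1:ℝ), by simp, by simp [h]⟩
    · refine ⟨‖res‖⁻¹ • res, ?_, ?_⟩
      · simp [norm_smul, inv_mul_cancel₀ (norm_ne_zero_iff.mpr h)]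
      · rw [smul_smul, mul_inv_cancel₀ (norm_ne_zero_iff.mpr h), one_smul]
  set v : EuclideanSpace ℝ (Fin N) := ‖α‖⁻¹ • α with hv
  have hvn : ‖v‖ ≤ 1 := by
    by_cases h : α = 0
    · simp [hv, h]
    · simp [hv, norm_smul, inv_mul_cancel₀ (norm_ne_zero_iff.mpr h)]
  have hva : (inner ℝ v α : ℝ) = ‖α‖ := by
    rw [hv, real_inner_smul_left, real_inner_self_eq_norm_sq]
    by_cases h : α = 0
    · simp [h]
    · rw [sq, inv_mul_cancel_left₀ (norm_ne_zero_iff.mpr h)]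
  set ΔX : Matrix (Fin n) (Fin N) ℝ := Matrix.of fun i j => -ρ * u i * v j with hΔX
  have hΔXapp : ∀ x : EuclideanSpace ℝ (Fin N),
      Matrix.toEuclideanLin ΔX x = (-ρ * (inner ℝ v x : ℝ)) • u := by
    intro x
    ext i
    rw [entrywise_apply]
    simp only [hΔX, Matrix.of_apply, PiLp.smul_apply, smul_eq_mul, PiLp.inner_apply,
      RCLike.inner_apply, conj_trivial]
    rw [Finset.mul_sum, Finset.sum_mul]
    exact Finset.sum_congr rfl fun j _ => by ring
  have hΔXnorm : matOpNorm ΔX ≤ ρ := by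
    apply ContinuousLinearMap.opNorm_le_bound _ hρ
    intro x
    rw [LinearMap.coe_toContinuousLinearMap', hΔXapp x, norm_smul, hu1, mul_one,
      Real.norm_eq_abs]
    have := abs_real_inner_le_norm v x
    calc |(-ρ * (inner ℝ v x : ℝ))| = ρ * |(inner ℝ v x : ℝ)| := by
          rw [abs_mul, abs_neg, abs_of_nonneg hρ]
      _ ≤ ρ * (‖v‖ * ‖x‖) := by exact mul_le_mul_of_nonneg_left this hρ
      _ ≤ ρ * (1 * ‖x‖) := by
          apply mul_le_mul_of_nonneg_left _ hρ
          exact mul_le_mul_of_nonneg_right hvn (norm_nonneg x)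
      _ = ρ * ‖x‖ := by ring
  apply IsGreatest.csSup_eq
  constructor
  · -- membership: witness
    refine ⟨ρ • u, ΔX, ?_, hΔXnorm, ?_⟩
    · simp [norm_smul, hu1, abs_of_nonneg hρ]
    · have : (Y + ρ • u) - Matrix.toEuclideanLin (X + ΔX) α
          = (‖res‖ + ρ * ‖α‖ + ρ) • u := by
        have hY : Y = ‖res‖ • u + Matrix.toEuclideanLin X α := by
          rw [← hu2, hres]; abel
        rw [map_add, LinearMap.add_apply, hΔXapp α, hva, hY]
        module
      rw [this, norm_smul, hu1, mul_one, Real.norm_of_nonneg (by positivity)]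
  · -- upper bound
    rintro r ⟨ΔY, ΔX', hΔY, hΔX', rfl⟩
    have h1 : ‖Matrix.toEuclideanLin ΔX' α‖ ≤ ρ * ‖α‖ := by
      have := (LinearMap.toContinuousLinearMap (Matrix.toEuclideanLin ΔX')).le_opNorm α
      rw [LinearMap.coe_toContinuousLinearMap'] at this
      exact this.trans (mul_le_mul_of_nonneg_right hΔX' (norm_nonneg α))
    calc ‖(Y + ΔY) - Matrix.toEuclideanLin (X + ΔX') α‖
        = ‖res + (ΔY - Matrix.toEuclideanLin ΔX' α)‖ := by
          rw [map_add, LinearMap.add_apply]; congr 1; rw [hres]; abel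
      _ ≤ ‖res‖ + ‖ΔY - Matrix.toEuclideanLin ΔX' α‖ := norm_add_le _ _
      _ ≤ ‖res‖ + (‖ΔY‖ + ‖Matrix.toEuclideanLin ΔX' α‖) := by
          gcongr; exact norm_sub_le _ _
      _ ≤ ‖res‖ + (ρ + ρ * ‖α‖) := by gcongr
      _ = ‖res‖ + ρ * ‖α‖ + ρ := by ring
end

section
/- Let n ≥ 1 and N ≥ 1, let Y ∈ ℝⁿ, let X be a real n × N matrix, and let ρ ≥ 0. Define the robust objective f(α) = sup { ‖(Y + ΔY) − (X + ΔX)α‖₂ : ‖ΔY‖₂ ≤ ρ, ‖ΔX‖ ≤ ρ } and the Ridge objective g(α) = ‖Y − Xα‖₂ + ρ‖α‖₂ for α ∈ ℝᴺ. Then a vector α⋆ ∈ ℝᴺ is a global minimizer of f if and only if it is a global minimizer of g; that is, the min–max robust least-squares problem is equivalent to the Ridge regression problem with regularization parameter λ₂ = ρ. -/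
open scoped RealInnerProductSpace


lemma matOpNorm_bound {n N : ℕ} (M : Matrix (Fin n) (Fin N) ℝ)
    (x : EuclideanSpace ℝ (Fin N)) :
    ‖Matrix.toEuclideanLin M x‖ ≤ matOpNorm M * ‖x‖ :=
  (LinearMap.toContinuousLinearMap (Matrix.toEuclideanLin M)).le_opNorm x

lemma sup_eq {n N : ℕ} (hn : 1 ≤ n)
    (Y : EuclideanSpace ℝ (Fin n)) (X : Matrix (Fin n) (Fin N) ℝ)
    (ρ : ℝ) (hρ : 0 ≤ ρ) (α : EuclideanSpace ℝ (Fin N)) :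
    sSup { r : ℝ |
        ∃ (ΔY : EuclideanSpace ℝ (Fin n)) (ΔX : Matrix (Fin n) (Fin N) ℝ),
          ‖ΔY‖ ≤ ρ ∧ matOpNorm ΔX ≤ ρ ∧
          r = ‖(Y + ΔY) - Matrix.toEuclideanLin (X + ΔX) α‖ }
      = ‖Y - Matrix.toEuclideanLin X α‖ + ρ * ‖α‖ + ρ := by
  classical
  set w : EuclideanSpace ℝ (Fin n) := Y - Matrix.toEuclideanLin X α with hw
  set V : ℝ := ‖w‖ + ρ * ‖α‖ + ρ with hV
  -- upper bound
  have hub : ∀ r ∈ { r : ℝ |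
      ∃ (ΔY : EuclideanSpace ℝ (Fin n)) (ΔX : Matrix (Fin n) (Fin N) ℝ),
        ‖ΔY‖ ≤ ρ ∧ matOpNorm ΔX ≤ ρ ∧
        r = ‖(Y + ΔY) - Matrix.toEuclideanLin (X + ΔX) α‖ }, r ≤ V := by
    rintro r ⟨ΔY, ΔX, hY, hX, rfl⟩
    have expand : (Y + ΔY) - Matrix.toEuclideanLin (X + ΔX) α
        = w + ΔY - Matrix.toEuclideanLin ΔX α := by
      rw [map_add]
      simp only [LinearMap.add_apply]
      rw [hw]
      abel
    rw [expand]
    have h1 : ‖w + ΔY - Matrix.toEuclideanLin ΔX α‖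
        ≤ ‖w‖ + ‖ΔY‖ + ‖Matrix.toEuclideanLin ΔX α‖ :=
      (norm_sub_le _ _).trans (add_le_add (norm_add_le _ _) le_rfl)
    have h2 : ‖Matrix.toEuclideanLin ΔX α‖ ≤ ρ * ‖α‖ :=
      (matOpNorm_bound ΔX α).trans (mul_le_mul_of_nonneg_right hX (norm_nonneg _))
    rw [hV]; linarith
  -- witness achieving V
  have hFinn : (0 : ℕ) < n := hn
  set u : EuclideanSpace ℝ (Fin n) :=
    if w = 0 then EuclideanSpace.single ⟨0, hFinn⟩ (1:ℝ) else ‖w‖⁻¹ • w with hu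
  have hu1 : ‖u‖ = 1 := by
    rw [hu]
    split_ifs with hwz
    · simp [EuclideanSpace.norm_single]
    · rw [norm_smul, norm_inv, norm_norm, inv_mul_cancel₀ (norm_ne_zero_iff.2 hwz)]
  have hwu : w = ‖w‖ • u := by
    rw [hu]
    split_ifs with hwz
    · simp [hwz]
    · rw [smul_smul, mul_inv_cancel₀ (norm_ne_zero_iff.2 hwz), one_smul]
  set v : EuclideanSpace ℝ (Fin N) := ‖α‖⁻¹ • α with hv
  have hv1 : ‖v‖ ≤ 1 := by
    rw [hv]
    rcases eq_or_ne α 0 with h | h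
    · simp [h]
    · rw [norm_smul, norm_inv, norm_norm, inv_mul_cancel₀ (norm_ne_zero_iff.2 h)]
  have hvα : ⟪v, α⟫ = ‖α‖ := by
    rw [hv, real_inner_smul_left, real_inner_self_eq_norm_sq]
    rcases eq_or_ne α 0 with h | h
    · simp [h]
    · rw [pow_two, ← mul_assoc, inv_mul_cancel₀ (norm_ne_zero_iff.2 h), one_mul]
  set ΔX : Matrix (Fin n) (Fin N) ℝ := Matrix.of fun i j => -(ρ * u i * v j) with hΔX
  have hΔXapp : ∀ x : EuclideanSpace ℝ (Fin N),
      Matrix.toEuclideanLin ΔX x = (-(ρ * ⟪v, x⟫)) • u := by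
    intro x
    ext i
    have h0 : Matrix.toEuclideanLin ΔX x i = ∑ j, ΔX i j * x j := rfl
    have hinner : ⟪v, x⟫ = ∑ j, v j * x j := by simp [PiLp.inner_apply, mul_comm]
    have h1 : ∑ j, ΔX i j * x j = (-(ρ * u i)) * ∑ j, v j * x j := by
      rw [Finset.mul_sum]
      exact Finset.sum_congr rfl (fun j _ => by simp only [hΔX, Matrix.of_apply]; ring)
    have h2 : ((-(ρ * ⟪v, x⟫)) • u) i = (-(ρ * ⟪v, x⟫)) * u i := rfl
    rw [h0, h1, h2, hinner]
    ring
  have hΔXnorm : matOpNorm ΔX ≤ ρ := by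
    apply ContinuousLinearMap.opNorm_le_bound _ hρ
    intro x
    have : ‖Matrix.toEuclideanLin ΔX x‖ = ρ * |⟪v, x⟫| := by
      rw [hΔXapp x, norm_smul, hu1, mul_one, Real.norm_eq_abs, abs_neg, abs_mul,
        abs_of_nonneg hρ]
    rw [show (LinearMap.toContinuousLinearMap (Matrix.toEuclideanLin ΔX)) x
        = Matrix.toEuclideanLin ΔX x from rfl, this]
    have := abs_real_inner_le_norm v x
    have h3 : |⟪v, x⟫| ≤ ‖x‖ := this.trans (by
      calc ‖v‖ * ‖x‖ ≤ 1 * ‖x‖ := by gcongr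
        _ = ‖x‖ := one_mul _)
    gcongr
  -- the witness value
  have hmem : V ∈ { r : ℝ |
      ∃ (ΔY : EuclideanSpace ℝ (Fin n)) (ΔX : Matrix (Fin n) (Fin N) ℝ),
        ‖ΔY‖ ≤ ρ ∧ matOpNorm ΔX ≤ ρ ∧
        r = ‖(Y + ΔY) - Matrix.toEuclideanLin (X + ΔX) α‖ } := by
    refine ⟨ρ • u, ΔX, ?_, hΔXnorm, ?_⟩
    · rw [norm_smul, hu1, mul_one, Real.norm_eq_abs, abs_of_nonneg hρ]
    · have expand : (Y + ρ • u) - Matrix.toEuclideanLin (X + ΔX) α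
          = w + ρ • u - Matrix.toEuclideanLin ΔX α := by
        rw [map_add]
        simp only [LinearMap.add_apply]
        rw [hw]
        abel
      rw [expand, hΔXapp α, hvα]
      have : w + ρ • u - (-(ρ * ‖α‖)) • u = (‖w‖ + ρ * ‖α‖ + ρ) • u := by
        conv_lhs => rw [hwu]
        module
      rw [this, norm_smul, hu1, mul_one, Real.norm_eq_abs, abs_of_nonneg]
      positivity
  refine le_antisymm (csSup_le ⟨V, hmem⟩ hub) (le_csSup ⟨V, hub⟩ hmem)


/-- The min–max robust least-squares problem is equivalent to Ridge regression with
regularization parameter `λ₂ = ρ`: a vector is a global minimizer of the robust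
objective iff it is a global minimizer of the Ridge objective. -/
theorem robust_min_max_iff_ridge {n N : ℕ} (hn : 1 ≤ n) (hN : 1 ≤ N)
    (Y : EuclideanSpace ℝ (Fin n)) (X : Matrix (Fin n) (Fin N) ℝ)
    (ρ : ℝ) (hρ : 0 ≤ ρ)
    (f g : EuclideanSpace ℝ (Fin N) → ℝ)
    (hf : ∀ α, f α = sSup { r : ℝ |
        ∃ (ΔY : EuclideanSpace ℝ (Fin n)) (ΔX : Matrix (Fin n) (Fin N) ℝ),
          ‖ΔY‖ ≤ ρ ∧ matOpNorm ΔX ≤ ρ ∧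
          r = ‖(Y + ΔY) - Matrix.toEuclideanLin (X + ΔX) α‖ })
    (hg : ∀ α, g α = ‖Y - Matrix.toEuclideanLin X α‖ + ρ * ‖α‖)
    (αstar : EuclideanSpace ℝ (Fin N)) :
    (∀ α, f αstar ≤ f α) ↔ (∀ α, g αstar ≤ g α) := by
  have key : ∀ α, f α = g α + ρ := fun α => by
    rw [hf α, hg α, sup_eq hn Y X ρ hρ α]
  constructor
  · intro h α
    have := h α
    rw [key α, key αstar] at this
    linarith
  · intro h α
    rw [key α, key αstar]
    linarith [h α]
end
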